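/- Let A ⊆ X be nonempty and x ∉ A, and let C^+_A(x) be the minimal cycle strictly containing the initial cycle C_A(x). Then a path ω from x to A (not touching A before its endpoint) is optimal (i.e., its elevation equals Φ(x,A)) if and only if all its states lie in C^+_A(x). -/

import Mathlib

/- Abstract energy landscape: finite state space `X`, energy `H`, connectivity `q`. -/

variable {X : Type*}

/-- A path from `x` to `y`: a nonempty finite sequence of states with consecutive
states connected by `q`. -/
def IsPath (q : X → X → Prop) (ω : List X) (x y : X) : Prop :=
  ω ≠ [] ∧ ω.Chain' q ∧ ω.head? = some x ∧ ω.getLast? = some y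

/-- The elevation (height) of a path: the maximal energy along it. -/
noncomputable def elev (H : X → ℝ) (ω : List X) : ℝ :=
  sSup (H '' {z | z ∈ ω})

/-- The communication energy between two states: the minimal elevation over paths. -/
noncomputable def commE (H : X → ℝ) (q : X → X → Prop) (x y : X) : ℝ :=
  sInf {e | ∃ ω, IsPath q ω x y ∧ elev H ω = e}

/-- The communication energy between two sets of states. -/
noncomputable def commSet (H : X → ℝ) (q : X → X → Prop) (A B : Set X) : ℝ :=
  sInf {e | ∃ x ∈ A, ∃ y ∈ B, commE H q x y = e}

/-- A set of states is connected if any two of its states are joined by a path inside it. -/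
def SetConn (q : X → X → Prop) (C : Set X) : Prop :=
  ∀ x ∈ C, ∀ y ∈ C, ∃ ω, IsPath q ω x y ∧ ∀ z ∈ ω, z ∈ C

/-- The external boundary of a set of states. -/
def extBdry (q : X → X → Prop) (C : Set X) : Set X :=
  {y | y ∉ C ∧ ∃ x ∈ C, q x y}

/-- A non-trivial cycle: a connected set whose maximal internal energy is strictly
below the minimal energy on its external boundary. -/
def IsNontrivialCycle (H : X → ℝ) (q : X → X → Prop) (C : Set X) : Prop :=
  C.Nonempty ∧ SetConn q C ∧ sSup (H '' C) < sInf (H '' extBdry q C)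

/-- A cycle: a singleton, or a non-trivial cycle. -/
def IsCycle (H : X → ℝ) (q : X → X → Prop) (C : Set X) : Prop :=
  (∃ x, C = {x}) ∨ IsNontrivialCycle H q C

/-- The communication energy between a state and a set of states. -/
noncomputable def commA (H : X → ℝ) (q : X → X → Prop) (x : X) (A : Set X) : ℝ :=
  sInf {e | ∃ y ∈ A, commE H q x y = e}

/-- The initial cycle `C_A(x) = {x} ∪ {z : Φ(x,z) < Φ(x,A)}`. -/
def initCycle (H : X → ℝ) (q : X → X → Prop) (A : Set X) (x : X) : Set X :=
  {x} ∪ {z | commE H q x z < commA H q x A}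

/-- `ω ∈ Ω_{x,A}`: a path from `x` ending in `A` which does not visit `A` before
its endpoint. -/
def InOmega (q : X → X → Prop) (A : Set X) (x : X) (ω : List X) : Prop :=
  ω ≠ [] ∧ ω.Chain' q ∧ ω.head? = some x ∧
    (∃ y ∈ A, ω.getLast? = some y) ∧ ∀ z ∈ ω.dropLast, z ∉ A

/-! ### Auxiliary lemmas -/

section Aux

variable {H : X → ℝ} {q : X → X → Prop}

lemma elev_mem_le (H : X → ℝ) {ω : List X} {z : X} (hz : z ∈ ω) :
    H z ≤ elev H ω := by
  have hfin : ({w | w ∈ ω} : Set X).Finite := ω.finite_toSet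
  exact le_csSup (hfin.image H).bddAbove ⟨z, hz, rfl⟩

lemma elev_le_of {ω : List X} (hne : ω ≠ []) {b : ℝ}
    (hb : ∀ z ∈ ω, H z ≤ b) : elev H ω ≤ b := by
  obtain ⟨z, hz⟩ := List.exists_mem_of_ne_nil ω hne
  refine csSup_le ⟨H z, z, hz, rfl⟩ ?_
  rintro _ ⟨w, hw, rfl⟩
  exact hb w hw

lemma elev_attained (H : X → ℝ) {ω : List X} (hne : ω ≠ []) :
    ∃ z ∈ ω, elev H ω = H z := by
  have hfin : ({w | w ∈ ω} : Set X).Finite := ω.finite_toSet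
  have hne' : (H '' {w | w ∈ ω}).Nonempty := by
    obtain ⟨z, hz⟩ := List.exists_mem_of_ne_nil ω hne
    exact ⟨H z, z, hz, rfl⟩
  obtain ⟨z, hz, he⟩ := hne'.csSup_mem (hfin.image H)
  exact ⟨z, hz, he.symm⟩

lemma elev_singleton (H : X → ℝ) (x : X) : elev H [x] = H x := by
  have h : ({z | z ∈ [x]} : Set X) = {x} := by ext z; simp
  rw [elev, h, Set.image_singleton, csSup_singleton]

lemma pathSet_finite [Fintype X] (H : X → ℝ) (q : X → X → Prop) (x y : X) :
    {e | ∃ ω, IsPath q ω x y ∧ elev H ω = e}.Finite := by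
  have hsub : {e | ∃ ω, IsPath q ω x y ∧ elev H ω = e} ⊆
      Set.range (fun S : Set X => sSup (H '' S)) := by
    rintro e ⟨ω, _, rfl⟩
    exact ⟨{z | z ∈ ω}, rfl⟩
  exact (Set.finite_range _).subset hsub

lemma commE_exists [Fintype X] (H : X → ℝ)
    (hirr : ∀ a b : X, ∃ ω, IsPath q ω a b) (x y : X) :
    ∃ ω, IsPath q ω x y ∧ elev H ω = commE H q x y := by
  have hne : {e | ∃ ω, IsPath q ω x y ∧ elev H ω = e}.Nonempty := by
    obtain ⟨ω, hω⟩ := hirr x y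
    exact ⟨elev H ω, ω, hω, rfl⟩
  exact hne.csInf_mem (pathSet_finite H q x y)

lemma commE_le_elev [Fintype X] (H : X → ℝ) {ω : List X} {x y : X}
    (h : IsPath q ω x y) : commE H q x y ≤ elev H ω :=
  csInf_le (pathSet_finite H q x y).bddBelow ⟨ω, h, rfl⟩

lemma commA_le [Fintype X] (H : X → ℝ) (q : X → X → Prop) {A : Set X} {y : X}
    (hy : y ∈ A) (x : X) : commA H q x A ≤ commE H q x y :=
  csInf_le ((A.toFinite.image (commE H q x)).bddBelow) ⟨y, hy, rfl⟩

lemma commA_exists [Fintype X] (H : X → ℝ) (q : X → X → Prop) {A : Set X}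
    (hA : A.Nonempty) (x : X) : ∃ y ∈ A, commE H q x y = commA H q x A :=
  (hA.image (commE H q x)).csInf_mem (A.toFinite.image (commE H q x))

lemma mem_of_head? {ω : List X} {x : X} (h : ω.head? = some x) : x ∈ ω :=
  List.mem_of_mem_head? (by simp [h])

lemma mem_of_getLast? {ω : List X} {x : X} (h : ω.getLast? = some x) : x ∈ ω :=
  List.mem_of_mem_getLast? (by simp [h])

lemma IsPath.reverse (hsymm : ∀ a b, q a b → q b a) {ω : List X} {x y : X}
    (h : IsPath q ω x y) : IsPath q ω.reverse y x := by
  obtain ⟨hne, hch, hh, hl⟩ := h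
  refine ⟨by simpa using hne, ?_, ?_, ?_⟩
  · show List.IsChain _ _; rw [List.isChain_reverse]
    exact hch.imp (fun a b hab => hsymm a b hab)
  · rw [List.head?_reverse]; exact hl
  · rw [List.getLast?_reverse]; exact hh

lemma IsPath.concat {ω₁ ω₂ : List X} {x u y : X}
    (h₁ : IsPath q ω₁ x u) (h₂ : IsPath q ω₂ u y) :
    ∃ ω, IsPath q ω x y ∧ ∀ z ∈ ω, z ∈ ω₁ ∨ z ∈ ω₂ := by
  obtain ⟨hne₁, hch₁, hh₁, hl₁⟩ := h₁
  obtain ⟨hne₂, hch₂, hh₂, hl₂⟩ := h₂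
  obtain ⟨t, rfl⟩ : ∃ t, ω₂ = u :: t := by
    cases ω₂ with
    | nil => simp at hne₂
    | cons a t =>
      simp only [List.head?_cons, Option.some.injEq] at hh₂
      exact ⟨t, by rw [hh₂]⟩
  refine ⟨ω₁ ++ t, ⟨by simp [hne₁], ?_, ?_, ?_⟩, ?_⟩
  · show List.IsChain _ _; rw [List.isChain_append]
    refine ⟨hch₁, (List.isChain_cons.mp hch₂).2, ?_⟩
    intro a ha b hb
    have hau : u = a := by rw [hl₁] at ha; simpa using ha
    subst hau
    exact (List.isChain_cons.mp hch₂).1 b hb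
  · cases ω₁ with
    | nil => simp at hne₁
    | cons c s => simpa using hh₁
  · cases t with
    | nil =>
      have huy : u = y := by simpa using hl₂
      simpa [huy] using hl₁
    | cons b t' =>
      have h2 : (b :: t').getLast? = some y := by
        rw [← hl₂]; exact (List.getLast?_cons_cons).symm
      rw [List.getLast?_append, h2]; rfl
  · intro z hz
    rcases List.mem_append.mp hz with h | h
    · exact Or.inl h
    · exact Or.inr (List.mem_cons_of_mem _ h)

lemma IsPath.prefix {ω : List X} {x y z : X} (h : IsPath q ω x y) (hz : z ∈ ω) :
    ∃ ω', IsPath q ω' x z ∧ ∀ w ∈ ω', w ∈ ω := by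
  obtain ⟨hne, hch, hh, hl⟩ := h
  obtain ⟨l₁, l₂, rfl⟩ := List.append_of_mem hz
  refine ⟨l₁ ++ [z], ⟨by simp, ?_, ?_, ?_⟩, ?_⟩
  · exact hch.prefix ⟨l₂, by simp⟩
  · cases l₁ with
    | nil => simpa using hh
    | cons a s => simpa using hh
  · simp
  · intro w hw
    rcases List.mem_append.mp hw with h | h
    · exact List.mem_append.mpr (Or.inl h)
    · simp only [List.mem_singleton] at h
      subst h
      exact List.mem_append.mpr (Or.inr List.mem_cons_self)

lemma first_exit (S : Set X) :
    ∀ (ω : List X), ω.Chain' q → ∀ x, ω.head? = some x → x ∈ S →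
      ∀ z ∈ ω, z ∉ S → ∃ u v, u ∈ S ∧ v ∉ S ∧ q u v ∧ v ∈ ω := by
  intro ω
  induction ω with
  | nil => simp
  | cons a t ih =>
    intro hch x hxh hxS z hz hzS
    have hax : a = x := by simpa using hxh
    subst hax
    cases t with
    | nil =>
      simp only [List.mem_singleton] at hz
      subst hz
      exact absurd hxS hzS
    | cons b t' =>
      by_cases hb : b ∈ S
      · have hzt : z ∈ b :: t' := by
          rcases List.mem_cons.mp hz with h | h
          · exact absurd (h ▸ hxS) hzS
          · exact h
        obtain ⟨u, v, h1, h2, h3, h4⟩ := ih hch.tail b rfl hb z hzt hzS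
        exact ⟨u, v, h1, h2, h3, List.mem_cons_of_mem _ h4⟩
      · exact ⟨a, b, hxS, hb, (List.isChain_cons_cons.mp hch).1, by simp⟩

end Aux

/-- optimal path characterization. Given the minimal cycle `Cp`
strictly containing the initial cycle `C_A(x)`, a path `ω ∈ Ω_{x,A}` is optimal
(its elevation equals `Φ(x,A)`) iff all its states lie in `Cp`. -/
theorem optimal_path_characterization [Fintype X] (H : X → ℝ) (q : X → X → Prop)
    (hsymm : ∀ x y, q x y → q y x)
    (hirr : ∀ x y : X, ∃ ω, IsPath q ω x y)
    (A : Set X) (hA : A.Nonempty) (x : X) (hx : x ∉ A)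
    (Cp : Set X) (hcyc : IsCycle H q Cp)
    (hsub : initCycle H q A x ⊂ Cp)
    (hmin : ∀ C', IsCycle H q C' → initCycle H q A x ⊂ C' → Cp ⊆ C')
    (ω : List X) :
    (InOmega q A x ω ∧ elev H ω = commA H q x A) ↔
      (InOmega q A x ω ∧ ∀ z ∈ ω, z ∈ Cp) := by
  set Γ := commA H q x A with hΓdef
  -- Γ is attained at some y* ∈ A
  obtain ⟨ys, hysA, hysΓ⟩ := commA_exists H q hA x
  -- H z ≤ commE x z for every z
  have hHle : ∀ z : X, H z ≤ commE H q x z := by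
    intro z
    obtain ⟨ω₀, hω₀, he⟩ := commE_exists H hirr x z
    have := elev_mem_le H (mem_of_getLast? hω₀.2.2.2)
    rwa [he] at this
  -- commE x x ≤ H x
  have hpathx : IsPath q [x] x x := ⟨by simp, List.isChain_singleton x, rfl, rfl⟩
  have hΦself : commE H q x x ≤ H x := by
    have := commE_le_elev H hpathx
    rwa [elev_singleton] at this
  have hxΓ : H x ≤ Γ := by
    obtain ⟨ω₀, hω₀, he⟩ := commE_exists H hirr x ys
    have h1 := elev_mem_le H (mem_of_head? hω₀.2.2.1)
    rw [he, hysΓ] at h1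
    exact h1
  -- the sublevel set D
  set D : Set X := {z | commE H q x z ≤ Γ} with hDdef
  have hxD : x ∈ D := le_trans hΦself hxΓ
  -- every optimal path to a point of D stays in D
  have hDpath : ∀ z ∈ D, ∃ ω', IsPath q ω' x z ∧ ∀ w ∈ ω', w ∈ D := by
    intro z hz
    obtain ⟨ω₀, hω₀, he⟩ := commE_exists H hirr x z
    refine ⟨ω₀, hω₀, ?_⟩
    intro w hw
    obtain ⟨ω', hω', hsub'⟩ := hω₀.prefix hw
    have h1 : commE H q x w ≤ elev H ω' := commE_le_elev H hω'
    have h2 : elev H ω' ≤ elev H ω₀ :=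
      elev_le_of hω'.1 (fun v hv => elev_mem_le H (hsub' v hv))
    have : commE H q x w ≤ commE H q x z := by rw [← he]; exact h1.trans h2
    exact this.trans hz
  -- one-step extension bound
  have hedge : ∀ u w, u ∈ D → q u w → commE H q x w ≤ max Γ (H w) := by
    intro u w hu hq
    obtain ⟨ω₀, hω₀, he⟩ := commE_exists H hirr x u
    have hp2 : IsPath q [u, w] u w := ⟨by simp, List.isChain_pair.mpr hq, rfl, rfl⟩
    obtain ⟨ωc, hωc, hmem⟩ := hω₀.concat hp2
    refine (commE_le_elev H hωc).trans (elev_le_of hωc.1 ?_)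
    intro v hv
    rcases hmem v hv with h | h
    · have : H v ≤ elev H ω₀ := elev_mem_le H h
      rw [he] at this
      exact le_max_of_le_left (this.trans hu)
    · rcases List.mem_cons.mp h with rfl | h
      · have : H v ≤ elev H ω₀ := elev_mem_le H (mem_of_getLast? hω₀.2.2.2)
        rw [he] at this
        exact le_max_of_le_left (this.trans hu)
      · simp only [List.mem_singleton] at h
        subst h
        exact le_max_right _ _
  -- L1': every point of Cp has energy at most Γ
  have hL1 : ∀ z ∈ Cp, H z ≤ Γ := by
    have key : Cp ⊆ D := by
      by_cases hDuniv : ∀ w, w ∈ D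
      · exact fun z _ => hDuniv z
      · push_neg at hDuniv
        obtain ⟨w₀, hw₀⟩ := hDuniv
        -- boundary points of D are high
        have hbdry : ∀ w ∈ extBdry q D, Γ < H w := by
          rintro w ⟨hwD, u, huD, hq⟩
          by_contra hcon
          push_neg at hcon
          have := hedge u w huD hq
          rw [max_eq_left hcon] at this
          exact hwD this
        -- the boundary is nonempty
        have hbne : (extBdry q D).Nonempty := by
          obtain ⟨ω₀, hω₀⟩ := hirr x w₀
          obtain ⟨u, v, h1, h2, h3, _⟩ :=
            first_exit D ω₀ hω₀.2.1 x hω₀.2.2.1 hxD w₀ (mem_of_getLast? hω₀.2.2.2) hw₀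
          exact ⟨v, h2, u, h1, h3⟩
        -- D is a nontrivial cycle
        have hDcyc : IsNontrivialCycle H q D := by
          refine ⟨⟨x, hxD⟩, ?_, ?_⟩
          · intro u hu v hv
            obtain ⟨ωu, hωu, hu'⟩ := hDpath u hu
            obtain ⟨ωv, hωv, hv'⟩ := hDpath v hv
            obtain ⟨ωc, hωc, hmem⟩ := (hωu.reverse hsymm).concat hωv
            refine ⟨ωc, hωc, ?_⟩
            intro z hz
            rcases hmem z hz with h | h
            · exact hu' z (List.mem_reverse.mp h)
            · exact hv' z h
          · have hsup : sSup (H '' D) ≤ Γ := by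
              refine csSup_le ⟨H x, x, hxD, rfl⟩ ?_
              rintro _ ⟨z, hz, rfl⟩
              exact (hHle z).trans hz
            have hinf : Γ < sInf (H '' extBdry q D) := by
              obtain ⟨w, hw, he⟩ :=
                (hbne.image H).csInf_mem ((extBdry q D).toFinite.image H)
              rw [← he]
              exact hbdry w hw
            exact lt_of_le_of_lt hsup hinf
        -- initCycle ⊂ D
        have hCD : initCycle H q A x ⊂ D := by
          constructor
          · rintro z (rfl | hz)
            · exact hxD
            · exact le_of_lt (show commE H q x z < commA H q x A from hz)
          · intro hDC
            have hysD : ys ∈ D := by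
              simp only [hDdef, Set.mem_setOf_eq, hΓdef]
              exact le_of_eq hysΓ
            rcases hDC hysD with h | h
            · exact hx ((Set.mem_singleton_iff.mp h) ▸ hysA)
            · have h' : commE H q x ys < commA H q x A := h
              rw [hysΓ] at h'
              exact lt_irrefl _ h'
        exact hmin D (Or.inr hDcyc) hCD
    intro z hz
    exact (hHle z).trans (key hz)
  -- Cp is a nontrivial cycle
  obtain ⟨c, hcCp, hcC⟩ := Set.exists_of_ssubset hsub
  have hxCp : x ∈ Cp := hsub.1 (Or.inl rfl)
  have hcyc' : IsNontrivialCycle H q Cp := by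
    rcases hcyc with ⟨a, ha⟩ | h
    · exfalso
      have h1 : x = a := by rw [ha] at hxCp; exact hxCp
      have h2 : c = a := by rw [ha] at hcCp; exact hcCp
      exact hcC (h2.trans h1.symm ▸ Or.inl rfl)
    · exact h
  -- some point of Cp has energy ≥ Γ
  have hsupge : ∃ z₀ ∈ Cp, Γ ≤ H z₀ := by
    by_contra hcon
    push_neg at hcon
    have : Cp ⊆ initCycle H q A x := by
      intro z hz
      by_cases hzx : z = x
      · exact Or.inl hzx
      · obtain ⟨ωz, hωz, hmem⟩ := hcyc'.2.1 x hxCp z hz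
        obtain ⟨z₀, hz₀, he⟩ := elev_attained H hωz.1
        have h1 : commE H q x z ≤ elev H ωz := commE_le_elev H hωz
        rw [he] at h1
        exact Or.inr (lt_of_le_of_lt h1 (hcon z₀ (hmem z₀ hz₀)))
    exact hsub.2 this
  -- every external boundary point of Cp is strictly above Γ
  have hbdryCp : ∀ w ∈ extBdry q Cp, Γ < H w := by
    intro w hw
    obtain ⟨z₀, hz₀, hΓz₀⟩ := hsupge
    have h1 : H z₀ ≤ sSup (H '' Cp) :=
      le_csSup (Cp.toFinite.image H).bddAbove ⟨z₀, hz₀, rfl⟩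
    have h2 : sInf (H '' extBdry q Cp) ≤ H w :=
      csInf_le ((extBdry q Cp).toFinite.image H).bddBelow ⟨w, hw, rfl⟩
    exact lt_of_le_of_lt (hΓz₀.trans h1) (lt_of_lt_of_le hcyc'.2.2 h2)
  -- the equivalence
  constructor
  · rintro ⟨hω, helev⟩
    refine ⟨hω, ?_⟩
    by_contra hcon
    push_neg at hcon
    obtain ⟨z, hz, hzCp⟩ := hcon
    obtain ⟨hne, hch, hh, ⟨y, hyA, hl⟩, hdrop⟩ := hω
    obtain ⟨u, v, h1, h2, h3, h4⟩ := first_exit Cp ω hch x hh hxCp z hz hzCp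
    have hvΓ : Γ < H v := hbdryCp v ⟨h2, u, h1, h3⟩
    have : H v ≤ Γ := by
      have := elev_mem_le H h4
      rwa [helev] at this
    exact absurd this (not_le.mpr hvΓ)
  · rintro ⟨hω, hall⟩
    refine ⟨hω, ?_⟩
    obtain ⟨hne, hch, hh, ⟨y, hyA, hl⟩, hdrop⟩ := hω
    have hle : elev H ω ≤ Γ := elev_le_of hne (fun z hz => hL1 z (hall z hz))
    have hge : Γ ≤ elev H ω :=
      (commA_le H q hyA x).trans (commE_le_elev H ⟨hne, hch, hh, hl⟩)
    exact le_antisymm hle hge
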